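/- Let S = [[1,0],[0,0]] and T(d) = [[d, √(d(1−d))],[√(d(1−d)), 1−d]]. For every 0 ≤ d < 1 there exists ε > 0 such that for all 0 < ε̃ < ε: ‖S − T(1/2 − ε̃)‖ > 1/√2 and ‖T(d) − T(1/2 − ε̃)‖ < 1/√2. -/
import Mathlib


/-- The operator norm (ℓ²→ℓ² norm) of a square matrix. -/
noncomputable def matOpNorm {n : Type*} [Fintype n] [DecidableEq n] {𝕜 : Type*} [RCLike 𝕜]
    (M : Matrix n n 𝕜) : ℝ :=
  ‖Matrix.toEuclideanCLM (𝕜 := 𝕜) M‖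

/-- The rank-one projection matrix `S = [[1,0],[0,0]]`. -/
noncomputable def Smat : Matrix (Fin 2) (Fin 2) ℝ := !![1, 0; 0, 0]

/-- The rank-one projection matrix `T(d) = [[d, √(d(1−d))],[√(d(1−d)), 1−d]]`. -/
noncomputable def Tmat (d : ℝ) : Matrix (Fin 2) (Fin 2) ℝ :=
  !![d, Real.sqrt (d * (1 - d)); Real.sqrt (d * (1 - d)), 1 - d]

set_option synthInstance.maxHeartbeats 1000000
set_option maxHeartbeats 1000000

open Matrix

lemma matOpNorm_eq_of (M : Matrix (Fin 2) (Fin 2) ℝ) (c : ℝ) (hc : 0 ≤ c)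
    (h : Mᵀ * M = (c^2) • 1) : matOpNorm M = c := by
  have hstar : star M = Mᵀ := by
    ext i j; simp [Matrix.star_apply]
  have h1 : star (Matrix.toEuclideanCLM (𝕜 := ℝ) M) * Matrix.toEuclideanCLM (𝕜 := ℝ) M
      = (c^2) • 1 := by
    rw [← map_star, ← _root_.map_mul, hstar, h, _root_.map_smul, _root_.map_one]
  have h2 : matOpNorm M ^ 2 = c ^ 2 := by
    rw [matOpNorm, sq, ← CStarRing.norm_star_mul_self, h1]
    rw [norm_smul (c ^ 2) (1 : EuclideanSpace ℝ (Fin 2) →L[ℝ] EuclideanSpace ℝ (Fin 2)),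
      norm_one, Real.norm_eq_abs, abs_of_nonneg (sq_nonneg c), mul_one]
  calc matOpNorm M = Real.sqrt (matOpNorm M ^ 2) :=
        (Real.sqrt_sq (norm_nonneg _)).symm
    _ = c := by rw [h2, Real.sqrt_sq hc]

lemma matOpNorm_traceless (p q : ℝ) :
    matOpNorm !![p, q; q, -p] = Real.sqrt (p^2 + q^2) := by
  apply matOpNorm_eq_of _ _ (Real.sqrt_nonneg _)
  rw [Real.sq_sqrt (by positivity)]
  have ht : (!![p, q; q, -p])ᵀ = !![p, q; q, -p] := by
    rw [Matrix.eta_fin_two (!![p, q; q, -p])ᵀ]; simp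
  rw [ht]
  ext i j
  fin_cases i <;> fin_cases j <;>
    simp [Matrix.mul_apply, Fin.sum_univ_two, Matrix.one_apply] <;> ring

lemma normT (a b : ℝ) : matOpNorm (Tmat a - Tmat b) =
    Real.sqrt ((a - b)^2 + (Real.sqrt (a * (1 - a)) - Real.sqrt (b * (1 - b)))^2) := by
  have hm : Tmat a - Tmat b =
      !![a - b, Real.sqrt (a * (1 - a)) - Real.sqrt (b * (1 - b));
         Real.sqrt (a * (1 - a)) - Real.sqrt (b * (1 - b)), -(a - b)] := by
    ext i j
    fin_cases i <;> fin_cases j <;> simp [Tmat, Matrix.sub_apply] <;> ring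
  rw [hm, matOpNorm_traceless]

lemma smat_eq : Smat = Tmat 1 := by
  ext i j
  fin_cases i <;> fin_cases j <;> simp [Smat, Tmat]

lemma key (d : ℝ) (h₀ : 0 ≤ d) (h₁ : d < 1) (ε' : ℝ) (he0 : 0 < ε') (he : ε' < 1/4)
    (hkey : ε' * (2*d - 1) <
      2 * Real.sqrt (d * (1 - d)) * Real.sqrt ((1/2 - ε') * (1 - (1/2 - ε')))) :
    matOpNorm (Smat - Tmat (1/2 - ε')) > (Real.sqrt 2)⁻¹ ∧
    matOpNorm (Tmat d - Tmat (1/2 - ε')) < (Real.sqrt 2)⁻¹ := by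
  have hb0 : (0:ℝ) ≤ (1/2 - ε') * (1 - (1/2 - ε')) := by nlinarith
  have hd0 : (0:ℝ) ≤ d * (1 - d) := by nlinarith
  constructor
  · have h1' : matOpNorm (Smat - Tmat (1/2 - ε')) = Real.sqrt (1/2 + ε') := by
      rw [smat_eq, normT]
      congr 1
      rw [show (1:ℝ) * (1 - 1) = 0 by ring, Real.sqrt_zero, zero_sub, neg_sq,
        Real.sq_sqrt hb0]
      ring
    rw [h1', ← Real.sqrt_inv]
    exact Real.sqrt_lt_sqrt (by norm_num) (by linarith)
  · rw [normT, ← Real.sqrt_inv]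
    apply Real.sqrt_lt_sqrt (by positivity)
    nlinarith [Real.sq_sqrt hd0, Real.sq_sqrt hb0, hkey,
      Real.sqrt_nonneg (d * (1 - d)), Real.sqrt_nonneg ((1/2 - ε') * (1 - (1/2 - ε')))]

theorem stmt10 (d : ℝ) (h₀ : 0 ≤ d) (h₁ : d < 1) :
    ∃ ε > 0, ∀ ε' : ℝ, 0 < ε' → ε' < ε →
      matOpNorm (Smat - Tmat (1/2 - ε')) > (Real.sqrt 2)⁻¹ ∧
      matOpNorm (Tmat d - Tmat (1/2 - ε')) < (Real.sqrt 2)⁻¹ := by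
  rcases eq_or_lt_of_le h₀ with hd | hd
  · refine ⟨1/4, by norm_num, fun ε' he0 he ↦ ?_⟩
    apply key d h₀ h₁ ε' he0 he
    rw [← hd]
    rw [show (0:ℝ) * (1 - 0) = 0 by ring, Real.sqrt_zero]
    have := Real.sqrt_nonneg ((1/2 - ε') * (1 - (1/2 - ε')))
    nlinarith
  · have hK : 0 < Real.sqrt (d * (1 - d)) := Real.sqrt_pos.mpr (by nlinarith)
    refine ⟨min (1/4) (Real.sqrt (d * (1 - d)) / 2), lt_min (by norm_num) (by linarith),
      fun ε' he0 he ↦ ?_⟩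
    have he1 : ε' < 1/4 := lt_of_lt_of_le he (min_le_left _ _)
    have he2 : ε' < Real.sqrt (d * (1 - d)) / 2 := lt_of_lt_of_le he (min_le_right _ _)
    apply key d h₀ h₁ ε' he0 he1
    have hb0 : (0:ℝ) ≤ (1/2 - ε') * (1 - (1/2 - ε')) := by nlinarith
    have hL : (1:ℝ)/4 ≤ Real.sqrt ((1/2 - ε') * (1 - (1/2 - ε'))) := by
      nlinarith [Real.sq_sqrt hb0, Real.sqrt_nonneg ((1/2 - ε') * (1 - (1/2 - ε')))]
    nlinarith [hL, hK, he2, he0, h₁]
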